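/- With p_{n,s} defined by the recursion of the previous context, for every n ≥ 1 one has p_{n,n} = v^{-n(n-1)/2} (-1)^{n-1} (v - v^{-1})^{n-1} [n-1]_v!. -/

import Mathlib

open Finset

/-- Balanced quantum integer `[s]_v = (v^s - v^{-s})/(v - v⁻¹)`. -/
noncomputable def qint {F : Type*} [Field F] (v : F) (s : ℕ) : F :=
  (v ^ (s : ℤ) - v ^ (-(s : ℤ))) / (v - v⁻¹)

/-- Balanced quantum factorial `[n]_v! = ∏_{s=1}^n [s]_v`. -/
noncomputable def qfact {F : Type*} [Field F] (v : F) (n : ℕ) : F :=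
  ∏ s ∈ Finset.Icc 1 n, qint v s

/-- Balanced Gaussian binomial coefficient `[n choose k]_v`, defined by the
balanced Pascal recursion `[n+1,k]_v = v^{-(n+1-k)}[n,k-1]_v + v^k [n,k]_v`. -/
noncomputable def qbinom {F : Type*} [Field F] (v : F) : ℕ → ℕ → F
  | _, 0 => 1
  | 0, _ + 1 => 0
  | n + 1, k + 1 =>
      v ^ (-((n : ℤ) - k)) * qbinom v n k + v ^ ((k : ℤ) + 1) * qbinom v n (k + 1)

/-- `φ_n(j) = 0` if `n - j` is even, `1` if odd. -/
def phi (n j : ℕ) : ℕ := if Even ((n : ℤ) - j) then 0 else 1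

/-- The polynomials `p_{n,s} ∈ ℚ(v)` defined recursively. -/
noncomputable def pp (n : ℕ) : ℕ → RatFunc ℚ
  | 0 => 0
  | 1 => (RatFunc.X : RatFunc ℚ) ^ (-(phi n 1 : ℤ))
  | s + 2 =>
      ((RatFunc.X : RatFunc ℚ) ^ ((n : ℤ) * (s + 2)) -
          (RatFunc.X : RatFunc ℚ) ^ (-((n : ℤ) * (s + 2)))) /
        ((RatFunc.X : RatFunc ℚ) ^ ((phi n (s + 2) : ℤ) * (s + 2)) *
          ((RatFunc.X : RatFunc ℚ) ^ (n : ℤ) - (RatFunc.X : RatFunc ℚ) ^ (-(n : ℤ)))) -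
      ∑ t ∈ (Finset.Ico 1 (s + 2)).attach,
        pp n t.1 * qbinom (RatFunc.X : RatFunc ℚ) (s + 2) t.1 *
          (RatFunc.X : RatFunc ℚ) ^ (((phi n t.1 : ℤ) - (phi n (s + 2) : ℤ)) * (s + 2))
  decreasing_by exact (Finset.mem_Ico.mp t.2).2


open Finset Polynomial
noncomputable section
abbrev Fq := RatFunc ℚ
def vv : Fq := RatFunc.X
lemma vv_ne : vv ≠ 0 := RatFunc.X_ne_zero
lemma vpow_ne_one {m : ℕ} (hm : m ≠ 0) : vv ^ m ≠ 1 := by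
  intro h
  have h1 : (algebraMap (Polynomial ℚ) Fq) (Polynomial.X ^ m) = (algebraMap (Polynomial ℚ) Fq) 1 := by
    simpa [map_pow, RatFunc.algebraMap_X, vv] using h
  have h2 : (Polynomial.X : Polynomial ℚ) ^ m = 1 := RatFunc.algebraMap_injective ℚ h1
  have := congrArg Polynomial.natDegree h2
  simp [Polynomial.natDegree_X_pow] at this
  exact hm this

lemma vsub_ne {j : ℕ} (hj : 1 ≤ j) : vv ^ (j : ℤ) - vv ^ (-(j : ℤ)) ≠ 0 := by
  intro h
  have h2 : vv ^ (2 * j) = 1 := by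
    have := sub_eq_zero.mp h
    have h3 : vv ^ (j:ℤ) * vv ^ (j:ℤ) = vv ^ (-(j:ℤ)) * vv ^ (j:ℤ) := by rw [this]
    rw [← zpow_add₀ vv_ne, ← zpow_add₀ vv_ne] at h3
    have h4 : vv ^ (((2*j : ℕ)) : ℤ) = 1 := by push_cast; rw [two_mul]; simpa using h3
    rwa [zpow_natCast] at h4
  exact vpow_ne_one (by omega) h2

def dd (t : ℕ) : Fq := ∏ j ∈ Icc 1 t, (vv ^ (j : ℤ) - vv ^ (-(j : ℤ)))

lemma dd_ne (t : ℕ) : dd t ≠ 0 := by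
  refine Finset.prod_ne_zero_iff.mpr fun j hj => vsub_ne (mem_Icc.mp hj).1

def Pp (t : ℕ) : Polynomial Fq :=
  ∏ j ∈ range t, (Polynomial.C (vv ^ (-(j : ℤ))) * Polynomial.X - Polynomial.C (vv ^ (j : ℤ)))

lemma Pp_succ (k : ℕ) :
    Pp (k + 1) = Pp k * (Polynomial.C (vv ^ (-(k : ℤ))) * Polynomial.X - Polynomial.C (vv ^ (k : ℤ))) := by
  rw [Pp, prod_range_succ]; rfl

lemma zpow_neg_nat (k : ℕ) : vv ^ (-(k : ℤ)) = vv⁻¹ ^ k := by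
  rw [zpow_neg, zpow_natCast, inv_pow]

lemma zpow_nat (k : ℕ) : vv ^ ((k : ℤ)) = vv ^ k := zpow_natCast vv k

lemma Pp_funceq (k : ℕ) (y : Fq) :
    (Pp (k + 1)).eval (vv ^ 2 * y) = vv ^ (k + 1) * (vv * y - vv⁻¹) * (Pp k).eval y := by
  have hvw : vv * vv⁻¹ = 1 := mul_inv_cancel₀ vv_ne
  induction k with
  | zero =>
    simp [Pp, Pp_succ]
    linear_combination hvw
  | succ k ih =>
    rw [Pp_succ (k+1), Polynomial.eval_mul, ih, Pp_succ k, Polynomial.eval_mul]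
    simp only [Polynomial.eval_sub, Polynomial.eval_mul, Polynomial.eval_C, Polynomial.eval_X]
    have e1 : vv ^ (-((k:ℤ)+1)) = vv⁻¹ ^ (k+1) := by
      rw [show -((k:ℤ)+1) = -((k+1 : ℕ) : ℤ) by push_cast; ring, zpow_neg_nat]
    have e3 : vv ^ ((k:ℤ)+1) = vv ^ (k+1) := by
      rw [show ((k:ℤ)+1) = ((k+1 : ℕ) : ℤ) by push_cast; ring, zpow_nat]
    push_cast [e1, e3, zpow_neg_nat, zpow_nat]
    linear_combination ((vv*y - vv⁻¹) * (Pp k).eval y * vv^(k+2) * vv⁻¹^k * y) * hvw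

lemma qbinom_zero (s : ℕ) : qbinom vv s 0 = 1 := by cases s <;> rfl

lemma qbinom_eval : ∀ s t : ℕ, (Pp t).eval (vv ^ (2*s)) = vv^(s*t) * dd t * qbinom vv s t := by
  intro s
  induction s with
  | zero =>
    intro t
    cases t with
    | zero => simp [Pp, qbinom_zero, dd]
    | succ k =>
      rw [show qbinom vv 0 (k+1) = 0 from rfl]
      have h0 : (Pp (k+1)).eval (vv ^ (2*0)) = 0 := by
        rw [Pp, Polynomial.eval_prod]
        refine Finset.prod_eq_zero (Finset.mem_range.mpr (Nat.succ_pos k)) ?_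
        simp
      rw [h0]; ring
  | succ s ih =>
    intro t
    cases t with
    | zero => simp [Pp, qbinom_zero, dd]
    | succ k =>
      have hvw : vv * vv⁻¹ = 1 := mul_inv_cancel₀ vv_ne
      have hws : vv^s * vv⁻¹^s = 1 := by rw [← mul_pow, hvw, one_pow]
      have hwk : vv^k * vv⁻¹^k = 1 := by rw [← mul_pow, hvw, one_pow]
      have hwsk1 : vv^(s+k+1) * vv⁻¹^(s+k+1) = 1 := by rw [← mul_pow, hvw, one_pow]
      have e1 : vv ^ (-((k:ℤ)+1)) = vv⁻¹ ^ (k+1) := by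
        rw [show -((k:ℤ)+1) = -((k+1 : ℕ) : ℤ) by omega, zpow_neg_nat]
      have e3 : vv ^ ((k:ℤ)+1) = vv ^ (k+1) := by
        rw [show ((k:ℤ)+1) = ((k+1 : ℕ) : ℤ) by omega, zpow_nat]
      have e5 : vv ^ (-((s:ℤ) - k)) = vv ^ k * vv⁻¹ ^ s := by
        rw [show -((s:ℤ)-k) = (k:ℤ) + (-(s:ℤ)) by ring, zpow_add₀ vv_ne, zpow_nat, zpow_neg_nat]
      have hddk : dd (k+1) = dd k * (vv^(k+1) - vv⁻¹^(k+1)) := by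
        have := Finset.prod_Icc_succ_top (by omega : 1 ≤ k+1)
          (f := fun j : ℕ => vv ^ (j : ℤ) - vv ^ (-(j : ℤ)))
        rw [dd, dd, this, zpow_nat, zpow_neg_nat]
      have hA := ih k
      have hB := ih (k+1)
      rw [Pp_succ k, Polynomial.eval_mul, hddk] at hB
      simp only [Polynomial.eval_sub, Polynomial.eval_mul, Polynomial.eval_C, Polynomial.eval_X,
        zpow_neg_nat, zpow_nat] at hB
      rw [show qbinom vv (s+1) (k+1) =
        vv ^ (-((s:ℤ) - k)) * qbinom vv s k + vv ^ ((k:ℤ)+1) * qbinom vv s (k+1) from rfl]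
      rw [show 2*(s+1) = 2 + 2*s by ring, pow_add, Pp_funceq k (vv ^ (2*s))]
      rw [hddk, e3, e5]
      set A := (Pp k).eval (vv ^ (2*s)) with hAdef
      set S := vv^(k+1) - vv⁻¹^(k+1) with hSdef
      set g := dd k with hgdef
      rw [← mul_right_inj' (pow_ne_zero (s*(k+1)) vv_ne)]
      linear_combination (vv^(s*k+2*s+2*k+1) * vv⁻¹^s * S) * hA +
        (vv^(s*k+s+2*k+2)) * hB + (A * vv^(s*k+s+k)) * hwsk1 +
        (-(A * vv^(s*k+s+k))) * hvw + (-(A * vv^(s*k+s+3*k+2))) * hws +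
        (-(A * vv^(s*k+3*s+k+2))) * hwk

lemma qbinom_lt : ∀ s t : ℕ, s < t → qbinom vv s t = 0 := by
  intro s
  induction s with
  | zero => intro t ht; match t, ht with | (k+1), _ => rfl
  | succ s ih =>
    intro t ht
    match t, ht with
    | (k+1), ht =>
      rw [show qbinom vv (s+1) (k+1) =
        vv ^ (-((s:ℤ) - k)) * qbinom vv s k + vv ^ ((k:ℤ)+1) * qbinom vv s (k+1) from rfl]
      rw [ih k (by omega), ih (k+1) (by omega)]
      ring

lemma qbinom_diag : ∀ s : ℕ, qbinom vv s s = 1 := by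
  intro s
  induction s with
  | zero => rfl
  | succ s ih =>
    rw [show qbinom vv (s+1) (s+1) =
      vv ^ (-((s:ℤ) - s)) * qbinom vv s s + vv ^ ((s:ℤ)+1) * qbinom vv s (s+1) from rfl]
    rw [ih, qbinom_lt s (s+1) (by omega)]
    simp

lemma X_eq_vv : (RatFunc.X : RatFunc ℚ) = vv := rfl

lemma Rrec (n : ℕ) (hn : 1 ≤ n) : ∀ s : ℕ, 1 ≤ s →
    ∑ t ∈ Icc 1 s, pp n t * qbinom vv s t * vv ^ ((phi n t : ℤ) * s)
      = (vv ^ ((n:ℤ)*s) - vv ^ (-((n:ℤ)*s))) / (vv ^ (n:ℤ) - vv ^ (-(n:ℤ))) := by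
  intro s hs
  match s, hs with
  | 1, _ =>
    rw [show (Icc 1 1 : Finset ℕ) = {1} from rfl, Finset.sum_singleton]
    rw [show pp n 1 = vv ^ (-(phi n 1 : ℤ)) from by rw [pp, X_eq_vv], qbinom_diag]
    rw [show ((n:ℤ)*((1:ℕ):ℤ)) = (n:ℤ) by push_cast; ring]
    rw [div_self (vsub_ne hn)]
    rw [show ((phi n 1 : ℤ) * ((1:ℕ):ℤ)) = (phi n 1 : ℤ) by push_cast; ring]
    rw [mul_one, ← zpow_add₀ vv_ne]
    simp
  | (m+2), _ =>
    push_cast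
    have hup : ∑ t ∈ Icc 1 (m+2), pp n t * qbinom vv (m+2) t * vv ^ ((phi n t : ℤ) * ((m:ℤ)+2))
        = (∑ t ∈ Icc 1 (m+1), pp n t * qbinom vv (m+2) t * vv ^ ((phi n t : ℤ) * ((m:ℤ)+2)))
          + pp n (m+2) * qbinom vv (m+2) (m+2) * vv ^ ((phi n (m+2) : ℤ) * ((m:ℤ)+2)) := by
      exact Finset.sum_Icc_succ_top (by omega) _
    rw [hup, qbinom_diag, mul_one]
    have hpp : pp n (m+2) =
        (vv ^ ((n : ℤ) * ((m:ℤ) + 2)) - vv ^ (-((n : ℤ) * ((m:ℤ) + 2)))) /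
          (vv ^ ((phi n (m+2) : ℤ) * ((m:ℤ) + 2)) * (vv ^ (n : ℤ) - vv ^ (-(n : ℤ)))) -
        ∑ t ∈ (Finset.Ico 1 (m + 2)).attach,
          pp n t.1 * qbinom vv (m + 2) t.1 *
            vv ^ (((phi n t.1 : ℤ) - (phi n (m+2) : ℤ)) * ((m:ℤ) + 2)) := by
      rw [pp]
      simp only [X_eq_vv]
      try norm_cast
    rw [hpp, Finset.sum_attach (Finset.Ico 1 (m+2))
      (fun t => pp n t * qbinom vv (m+2) t * vv ^ (((phi n t : ℤ) - (phi n (m+2) : ℤ)) * ((m:ℤ)+2)))]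
    rw [show Finset.Ico 1 (m+2) = Finset.Icc 1 (m+1) from rfl]
    rw [sub_mul, Finset.sum_mul]
    have hterm : ∀ t ∈ Finset.Icc 1 (m+1),
        pp n t * qbinom vv (m+2) t * vv ^ (((phi n t : ℤ) - (phi n (m+2) : ℤ)) * ((m:ℤ)+2)) *
          vv ^ ((phi n (m+2) : ℤ) * ((m:ℤ)+2))
        = pp n t * qbinom vv (m+2) t * vv ^ ((phi n t : ℤ) * ((m:ℤ)+2)) := by
      intro t _
      rw [mul_assoc, mul_assoc, ← zpow_add₀ vv_ne]
      ring_nf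
    rw [Finset.sum_congr rfl hterm]
    have hQ : (vv ^ ((n : ℤ) * ((m:ℤ) + 2)) - vv ^ (-((n : ℤ) * ((m:ℤ) + 2)))) /
          (vv ^ ((phi n (m+2) : ℤ) * ((m:ℤ) + 2)) * (vv ^ (n : ℤ) - vv ^ (-(n : ℤ)))) *
          vv ^ ((phi n (m+2) : ℤ) * ((m:ℤ)+2))
        = (vv ^ ((n:ℤ)*((m:ℤ)+2)) - vv ^ (-((n:ℤ)*((m:ℤ)+2)))) / (vv ^ (n:ℤ) - vv ^ (-(n:ℤ))) := by
      rw [mul_comm (vv ^ ((phi n (m+2) : ℤ) * ((m:ℤ) + 2))) (vv ^ (n : ℤ) - vv ^ (-(n : ℤ)))]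
      rw [← div_div]
      exact div_mul_cancel₀ _ (zpow_ne_zero _ vv_ne)
    rw [hQ]
    ring

lemma phi_le_one (n j : ℕ) : phi n j ≤ 1 := by rw [phi]; split <;> omega

lemma phi_self (n : ℕ) : phi n n = 0 := by rw [phi]; simp

def ee (n t : ℕ) : ℕ := (n + phi n t - t) / 2

lemma two_ee (n t : ℕ) (ht : t ≤ n) : 2 * ee n t + t = n + phi n t := by
  rw [ee, phi]
  by_cases h : Even ((n:ℤ) - t)
  · rw [if_pos h]
    obtain ⟨r, hr⟩ := h
    omega
  · rw [if_neg h]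
    rcases Int.even_or_odd ((n:ℤ) - t) with he | ho
    · exact absurd he h
    · obtain ⟨r, hr⟩ := ho
      omega

lemma ee_self (n : ℕ) : ee n n = 0 := by
  have := two_ee n n le_rfl
  rw [phi_self] at this
  omega

lemma ee_pos (n t : ℕ) (ht : t < n) : 1 ≤ ee n t := by
  have := two_ee n t (le_of_lt ht)
  omega

lemma ee_add_le (n t : ℕ) (h1 : 1 ≤ t) (ht : t ≤ n) : ee n t + t ≤ n := by
  rcases eq_or_lt_of_le ht with rfl | hlt
  · rw [ee_self]; omega
  · have h2 := two_ee n t ht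
    have h3 : phi n t ≤ 1 := phi_le_one n t
    omega

def Dp (n : ℕ) : Polynomial Fq :=
  Polynomial.X ^ n - Polynomial.C 1 - Polynomial.C (vv ^ (n:ℤ) - vv ^ (-(n:ℤ))) *
    ∑ t ∈ Icc 1 n, Polynomial.C (pp n t * (dd t)⁻¹) * Polynomial.X ^ (ee n t) * Pp t

lemma Dp_eval (n : ℕ) (hn : 1 ≤ n) (s : ℕ) (hs : s ≤ n) : (Dp n).eval (vv ^ (2*s)) = 0 := by
  have heval : (Dp n).eval (vv ^ (2*s)) = (vv ^ (2*s)) ^ n - 1 -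
      (vv ^ (n:ℤ) - vv ^ (-(n:ℤ))) *
        ∑ t ∈ Icc 1 n, pp n t * (dd t)⁻¹ * ((vv ^ (2*s)) ^ (ee n t) * (Pp t).eval (vv ^ (2*s))) := by
    simp [Dp, Polynomial.eval_finset_sum, mul_assoc]
  rw [heval]
  have hterm : ∀ t ∈ Icc 1 n,
      pp n t * (dd t)⁻¹ * ((vv ^ (2*s)) ^ (ee n t) * (Pp t).eval (vv ^ (2*s)))
        = pp n t * qbinom vv s t * vv ^ (2*s*(ee n t) + s*t) := by
    intro t _
    rw [qbinom_eval s t, ← pow_mul, pow_add]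
    field_simp [dd_ne]
  rw [Finset.sum_congr rfl hterm]
  rcases Nat.eq_zero_or_pos s with rfl | hs1
  · have hz : ∀ t ∈ Icc 1 n, pp n t * qbinom vv 0 t * vv ^ (2*0*(ee n t) + 0*t) = 0 := by
      intro t ht
      rw [qbinom_lt 0 t (by exact (mem_Icc.mp ht).1)]
      ring
    rw [Finset.sum_congr rfl hz]
    simp
  · have hss : Icc 1 s ⊆ Icc 1 n := Finset.Icc_subset_Icc_right hs
    have hz : ∀ t ∈ Icc 1 n, t ∉ Icc 1 s →
        pp n t * qbinom vv s t * vv ^ (2*s*(ee n t) + s*t) = 0 := by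
      intro t ht hnt
      have h1 : 1 ≤ t := (mem_Icc.mp ht).1
      have : s < t := by
        by_contra hc
        exact hnt (mem_Icc.mpr ⟨h1, by omega⟩)
      rw [qbinom_lt s t this]
      ring
    rw [← Finset.sum_subset hss hz]
    have hterm2 : ∀ t ∈ Icc 1 s,
        pp n t * qbinom vv s t * vv ^ (2*s*(ee n t) + s*t)
          = pp n t * qbinom vv s t * vv ^ ((phi n t : ℤ) * s) * vv ^ (s*n) := by
      intro t ht
      have h1 := (mem_Icc.mp ht).1
      have h2 : t ≤ n := le_trans (mem_Icc.mp ht).2 hs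
      have he := two_ee n t h2
      have hexp : 2*s*(ee n t) + s*t = s*n + s*(phi n t) := by
        have : 2*s*(ee n t) + s*t = s*(2*(ee n t) + t) := by ring
        rw [this, he]; ring
      rw [hexp, pow_add, show vv ^ (s*(phi n t)) = vv ^ ((phi n t : ℤ) * s) from by
        rw [← zpow_natCast]; norm_cast; ring_nf]
      ring
    rw [Finset.sum_congr rfl hterm2, ← Finset.sum_mul, Rrec n hn s hs1]
    have hd : vv ^ (n:ℤ) - vv ^ (-(n:ℤ)) ≠ 0 := vsub_ne hn
    rw [div_mul_eq_mul_div, mul_div_assoc', mul_comm (vv ^ (n:ℤ) - vv ^ (-(n:ℤ))),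
      mul_div_assoc, div_self hd, mul_one]
    have e6 : vv ^ ((n:ℤ)*s) = vv ^ (n*s) := by rw [← zpow_natCast]; norm_cast
    have e7 : vv ^ (-((n:ℤ)*s)) = vv⁻¹ ^ (n*s) := by
      rw [show -((n:ℤ)*s) = -((n*s : ℕ) : ℤ) from by push_cast; ring, zpow_neg_nat]
    rw [e6, e7, ← pow_mul]
    have hws : vv ^ (n*s) * vv⁻¹ ^ (n*s) = 1 := by
      rw [← mul_pow, mul_inv_cancel₀ vv_ne, one_pow]
    linear_combination hws

lemma Pp_natDegree_le (t : ℕ) : (Pp t).natDegree ≤ t := by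
  refine le_trans (Polynomial.natDegree_prod_le _ _) ?_
  have hone : ∀ j ∈ range t,
      (Polynomial.C (vv ^ (-(j:ℤ))) * Polynomial.X - Polynomial.C (vv ^ (j:ℤ))).natDegree ≤ 1 := by
    intro j _
    refine le_trans (Polynomial.natDegree_sub_le _ _) ?_
    simp only [Polynomial.natDegree_C, Nat.max_le]
    refine ⟨le_trans (Polynomial.natDegree_mul_le)
      (by simp [Polynomial.natDegree_C, Polynomial.natDegree_X]), by omega⟩
  refine le_trans (Finset.sum_le_sum hone) ?_
  simp

lemma Dp_natDegree_le (n : ℕ) (hn : 1 ≤ n) : (Dp n).natDegree ≤ n := by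
  rw [Dp]
  refine le_trans (Polynomial.natDegree_sub_le _ _) ?_
  rw [Nat.max_le]
  constructor
  · refine le_trans (Polynomial.natDegree_sub_le _ _) ?_
    simp [Polynomial.natDegree_X_pow]
  · refine le_trans (Polynomial.natDegree_mul_le) ?_
    simp only [Polynomial.natDegree_C, Nat.zero_add, zero_add]
    refine le_trans (Polynomial.natDegree_sum_le _ _) ?_
    rw [Finset.fold_max_le]
    refine ⟨by omega, fun t ht => ?_⟩
    refine le_trans (Polynomial.natDegree_mul_le) ?_
    have h1 := (mem_Icc.mp ht).1
    have h2 := (mem_Icc.mp ht).2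
    have h3 := ee_add_le n t h1 h2
    have h4 := Pp_natDegree_le t
    have h5 : (Polynomial.C (pp n t * (dd t)⁻¹) * Polynomial.X ^ (ee n t)).natDegree ≤ ee n t := by
      refine le_trans (Polynomial.natDegree_mul_le) ?_
      rw [Polynomial.natDegree_C, Polynomial.natDegree_X_pow]
      omega
    omega

lemma Dp_eq_zero (n : ℕ) (hn : 1 ≤ n) : Dp n = 0 := by
  have hinj : Function.Injective (fun i : Fin (n+1) => vv ^ (2 * (i:ℕ))) := by
    have key : ∀ a b : ℕ, a < b → vv ^ (2*a) ≠ vv ^ (2*b) := by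
      intro a b hab heq
      have h1 : vv ^ (2*a) * vv ^ (2*(b-a)) = vv ^ (2*a) * 1 := by
        rw [mul_one, ← pow_add]
        rw [show 2*a + 2*(b-a) = 2*b by omega]
        exact heq.symm
      have h2 := mul_left_cancel₀ (pow_ne_zero _ vv_ne) h1
      exact vpow_ne_one (by omega) h2
    intro i j hij
    by_contra hne
    rcases Nat.lt_or_ge (i:ℕ) (j:ℕ) with h | h
    · exact key i j h hij
    · have : (j:ℕ) < (i:ℕ) := by
        rcases Nat.lt_or_ge (j:ℕ) (i:ℕ) with h' | h'
        · exact h'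
        · exact absurd (Fin.ext (le_antisymm h' h)) hne
      exact key j i this hij.symm
  refine Polynomial.eq_zero_of_natDegree_lt_card_of_eval_eq_zero (Dp n) hinj
    (fun i => Dp_eval n hn i (by omega : (i:ℕ) ≤ n)) ?_
  rw [Fintype.card_fin]
  have := Dp_natDegree_le n hn
  omega

lemma sum_range_id_choose (n : ℕ) : ∑ j ∈ range n, j = n.choose 2 := by
  have h1 := Finset.sum_range_id_mul_two n
  have h2 : n.choose 2 = n * (n-1) / 2 := Nat.choose_two_right n
  omega

lemma Pp_eval_zero (n : ℕ) : (Pp n).eval 0 = (-1)^n * vv ^ (n.choose 2) := by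
  rw [Pp, Polynomial.eval_prod]
  have : ∀ j ∈ range n,
      ((Polynomial.C (vv ^ (-(j:ℤ))) * Polynomial.X - Polynomial.C (vv ^ (j:ℤ))).eval 0)
        = (-1) * vv ^ j := by
    intro j _
    simp [zpow_nat]
  rw [Finset.prod_congr rfl this, Finset.prod_mul_distrib, Finset.prod_const,
    Finset.prod_pow_eq_pow_sum, sum_range_id_choose]
  simp

lemma vsub1_ne : vv - vv⁻¹ ≠ 0 := by
  have := vsub_ne (le_refl 1)
  rwa [Nat.cast_one, zpow_one, zpow_neg_one] at this

lemma dd_qfact (m : ℕ) : dd m = (vv - vv⁻¹)^m * qfact vv m := by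
  have hcard : (Icc 1 m).card = m := by rw [Nat.card_Icc]; omega
  have h1 : (vv - vv⁻¹)^m * qfact vv m = ∏ j ∈ Icc 1 m, ((vv - vv⁻¹) * qint vv j) := by
    rw [Finset.prod_mul_distrib, Finset.prod_const, hcard, qfact]
  rw [h1, dd]
  refine Finset.prod_congr rfl fun j hj => ?_
  rw [qint, mul_comm, div_mul_cancel₀ _ vsub1_ne]

lemma choose_pow_cancel (n : ℕ) : vv ^ (-(n.choose 2 : ℤ)) * vv ^ (n.choose 2) = 1 := by
  rw [zpow_neg_nat, ← mul_pow, inv_mul_cancel₀ vv_ne, one_pow]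

end

/-- `p_{n,n} = v^{-n(n-1)/2} (-1)^{n-1} (v - v⁻¹)^{n-1} [n-1]_v!`. -/
theorem stmt_8 (n : ℕ) (hn : 1 ≤ n) :
    pp n n = (RatFunc.X : RatFunc ℚ) ^ (-(n.choose 2 : ℤ)) * (-1) ^ (n - 1) *
      ((RatFunc.X : RatFunc ℚ) - (RatFunc.X : RatFunc ℚ)⁻¹) ^ (n - 1) *
        qfact (RatFunc.X : RatFunc ℚ) (n - 1) := by
  simp only [X_eq_vv]
  have hE0 : (Dp n).eval 0 = 0 := by rw [Dp_eq_zero n hn]; simp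
  have hEv : (Dp n).eval 0 = (0:Fq)^n - 1 - (vv ^ (n:ℤ) - vv ^ (-(n:ℤ))) *
      ∑ t ∈ Icc 1 n, pp n t * (dd t)⁻¹ * ((0:Fq)^(ee n t) * (Pp t).eval 0) := by
    simp [Dp, Polynomial.eval_finset_sum, mul_assoc]
  have hsingle : ∑ t ∈ Icc 1 n, pp n t * (dd t)⁻¹ * ((0:Fq)^(ee n t) * (Pp t).eval 0)
      = pp n n * (dd n)⁻¹ * ((-1)^n * vv ^ (n.choose 2)) := by
    rw [Finset.sum_eq_single_of_mem n (mem_Icc.mpr ⟨hn, le_rfl⟩)]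
    · rw [ee_self, pow_zero, one_mul, Pp_eval_zero]
    · intro t ht hne
      have h1 : 1 ≤ ee n t := ee_pos n t (lt_of_le_of_ne (le_of_eq_of_le rfl (mem_Icc.mp ht).2) hne)
      rw [zero_pow (by omega : ee n t ≠ 0)]
      ring
  rw [hEv, hsingle, zero_pow (by omega : n ≠ 0)] at hE0
  set a := vv ^ (n:ℤ) - vv ^ (-(n:ℤ)) with ha
  have ha_ne : a ≠ 0 := vsub_ne hn
  have hdd : dd n = dd (n-1) * a := by
    obtain ⟨m, rfl⟩ : ∃ m, n = m + 1 := ⟨n-1, by omega⟩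
    simp only [Nat.add_sub_cancel]
    rw [ha, dd, dd, Finset.prod_Icc_succ_top (by omega : 1 ≤ m+1)]
  have hx : pp n n * ((-1)^n * vv ^ (n.choose 2) * a) = -(dd n) := by
    have hdne := dd_ne n
    field_simp at hE0
    linear_combination -hE0
  have hM : ((-1:Fq)^n * vv ^ (n.choose 2) * a) ≠ 0 := by
    apply mul_ne_zero (mul_ne_zero _ (pow_ne_zero _ vv_ne)) ha_ne
    exact pow_ne_zero _ (by norm_num)
  refine mul_right_cancel₀ hM ?_
  rw [hx]
  have hsign : (-1:Fq)^(n-1) * (-1)^n = -1 := by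
    rw [← pow_add, show (n-1) + n = 2*(n-1)+1 by omega, pow_succ, pow_mul]
    norm_num
  have hC := choose_pow_cancel n
  rw [hdd, dd_qfact]
  linear_combination (-((vv - vv⁻¹)^(n-1) * qfact vv (n-1) * a * (-1)^(n-1) * (-1)^n)) * hC +
    (-((vv - vv⁻¹)^(n-1) * qfact vv (n-1) * a)) * hsign
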